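/- In the 6-state turn-based game with uniform observation from Figure 1 of the paper, agent a₁ has a compatible memoryless strategy ensuring F f from q₀ (namely playing move m₁ at both q₂ and q₃), but there is no compatible memoryless strategy ensuring XXX f from q₀, whereas a compatible history-dependent strategy ensuring XXX f from q₀ exists. -/

import Mathlib

def FPath (Q : Type*) := {l : List Q // l ≠ []}

def PathEquiv {Q : Type*} (r : Q → Q → Prop) (ρ ρ' : FPath Q) : Prop :=
  ρ.1.length = ρ'.1.length ∧
    ∀ (i : ℕ) (h : i < ρ.1.length) (h' : i < ρ'.1.length),
      r (ρ.1.get ⟨i, h⟩) (ρ'.1.get ⟨i, h'⟩)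

def CompatStrat {Q M : Type*} (r : Q → Q → Prop) (f : FPath Q → M) : Prop :=
  ∀ ρ ρ', PathEquiv r ρ ρ' → f ρ = f ρ'

def FPath.lastSt {Q : Type*} (ρ : FPath Q) : Q := ρ.1.getLast ρ.2

/-- A strategy is memoryless if its value depends only on the last state. -/
def Memoryless {Q M : Type*} (f : FPath Q → M) : Prop :=
  ∀ ρ ρ', ρ.lastSt = ρ'.lastSt → f ρ = f ρ'

def prefixPath {Q : Type*} (ρ : ℕ → Q) (n : ℕ) : FPath Q :=
  ⟨List.ofFn (fun i : Fin (n + 1) => ρ i), by simp⟩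



lemma lastSt_prefixPath {Q : Type*} (ρ : ℕ → Q) (n : ℕ) :
    (prefixPath ρ n).lastSt = ρ n := by
  rw [FPath.lastSt, List.getLast_eq_getElem]
  simp only [prefixPath, List.length_ofFn, List.getElem_ofFn]
  congr 1

/-- Label `P`: holds exactly at states `q₂` and `q₃`. -/
def labP16 (q : Fin 6) : Prop := q = 2 ∨ q = 3

/-- The uniform observation relation `≡_P`: two states are equivalent iff they
agree on `P`. -/
def obs16 (q q' : Fin 6) : Prop := labP16 q ↔ labP16 q'

/-- Owner map: agent `a₂` (here `1`) owns `q₀, q₁`; agent `a₁` (here `0`) owns the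
other states. -/
def own16 (q : Fin 6) : Fin 2 := if q = 0 ∨ q = 1 then 1 else 0

/-- Transition function of the turn-based game of Figure 1 (moves `0,1,2` standing
for `m₁,m₂,m₃`; the move of the owner determines the successor). -/
def edg16 (q : Fin 6) (m : Fin 3) : Fin 6 :=
  if q = 0 then (if m = 0 then 1 else if m = 1 then 3 else 2)
  else if q = 1 then 3
  else if q = 2 then (if m = 0 then 5 else 4)
  else if q = 3 then (if m = 0 then 2 else 5)
  else q

/-- Outcomes from `q₀` when agent `a₁` follows strategy `f` and agent `a₂` plays
arbitrarily. -/
def out16 (f : FPath (Fin 6) → Fin 3) : Set (ℕ → Fin 6) :=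
  {ρ | ρ 0 = 0 ∧ ∀ n,
    if own16 (ρ n) = 0 then ρ (n + 1) = edg16 (ρ n) (f (prefixPath ρ n))
    else ∃ m, ρ (n + 1) = edg16 (ρ n) m}

/-- In the game of Figure 1: agent `a₁` has a compatible memoryless strategy
ensuring `F f` from `q₀` (namely playing `m₁` at `q₂` and `q₃`); no compatible
memoryless strategy ensures `XXX f` from `q₀`; but a compatible history-dependent
strategy ensuring `XXX f` from `q₀` exists. -/
theorem figure1_game_properties :
    (∃ f : FPath (Fin 6) → Fin 3, Memoryless f ∧ CompatStrat obs16 f ∧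
      (∀ ρ, (ρ.lastSt = 2 ∨ ρ.lastSt = 3) → f ρ = 0) ∧
      ∀ ρ ∈ out16 f, ∃ n, ρ n = 5) ∧
    (¬ ∃ f : FPath (Fin 6) → Fin 3, Memoryless f ∧ CompatStrat obs16 f ∧
      ∀ ρ ∈ out16 f, ρ 3 = 5) ∧
    (∃ f : FPath (Fin 6) → Fin 3, CompatStrat obs16 f ∧
      ∀ ρ ∈ out16 f, ρ 3 = 5) := by
  have pp1 : ∀ ρ : ℕ → Fin 6, (prefixPath ρ 1).1 = [ρ 0, ρ 1] := by
    intro ρ; simp [prefixPath, List.ofFn_succ]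
  have pp2 : ∀ ρ : ℕ → Fin 6, (prefixPath ρ 2).1 = [ρ 0, ρ 1, ρ 2] := by
    intro ρ; simp [prefixPath, List.ofFn_succ]
  have h13 : ∀ x : Fin 3, edg16 1 x = 3 := by decide
  have h5 : ∀ x : Fin 3, edg16 5 x = 5 := by decide
  have h4 : ∀ x : Fin 3, edg16 4 x = 4 := by decide
  refine ⟨⟨fun _ => 0, fun _ _ _ => rfl, fun _ _ _ => rfl, fun _ _ => rfl, ?_⟩, ?_, ?_⟩
  · -- constant m₁ strategy ensures F f
    rintro ρ ⟨h0, hs⟩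
    have step : ∀ k q, ρ k = q → own16 q = 0 → ρ (k + 1) = edg16 q 0 := by
      intro k q hk ho
      have := hs k
      rw [hk, if_pos ho] at this
      exact this
    have h1 := hs 0
    rw [h0, if_neg (by decide)] at h1
    obtain ⟨m, hm⟩ := h1
    fin_cases m
    · -- ρ 1 = 1
      have e1 : ρ 1 = 1 := by rw [hm]; decide
      have h2 := hs 1
      rw [e1, if_neg (by decide)] at h2
      obtain ⟨m2, hm2⟩ := h2
      have e2 : ρ 2 = 3 := by rw [hm2, h13]
      have e3 : ρ 3 = 2 := by rw [step 2 3 e2 (by decide)]; decide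
      have e4 : ρ 4 = 5 := by rw [step 3 2 e3 (by decide)]; decide
      exact ⟨4, e4⟩
    · -- ρ 1 = 3
      have e1 : ρ 1 = 3 := by rw [hm]; decide
      have e2 : ρ 2 = 2 := by rw [step 1 3 e1 (by decide)]; decide
      have e3 : ρ 3 = 5 := by rw [step 2 2 e2 (by decide)]; decide
      exact ⟨3, e3⟩
    · -- ρ 1 = 2
      have e1 : ρ 1 = 2 := by rw [hm]; decide
      have e2 : ρ 2 = 5 := by rw [step 1 2 e1 (by decide)]; decide
      exact ⟨2, e2⟩
  · -- no memoryless compatible strategy ensures XXX f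
    rintro ⟨f, hmem, hcomp, hwin⟩
    obtain ⟨m, key⟩ :
        ∃ m : Fin 3, ∀ ρ : FPath (Fin 6), ρ.lastSt = 2 ∨ ρ.lastSt = 3 → f ρ = m := by
      refine ⟨f ⟨[3], by simp⟩, ?_⟩
      have e23 : f ⟨[2], by simp⟩ = f ⟨[3], by simp⟩ := by
        apply hcomp
        refine ⟨rfl, ?_⟩
        intro i h h'
        have hi : i = 0 := by simpa using h
        subst hi
        simp [obs16, labP16]
      intro ρ h
      rcases h with h | h
      · refine (hmem ρ ⟨[2], by simp⟩ ?_).trans e23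
        simpa [FPath.lastSt] using h
      · refine hmem ρ ⟨[3], by simp⟩ ?_
        simpa [FPath.lastSt] using h
    by_cases hm : m = 0
    · -- path 0,1,3,2,5,5,... violates ρ 3 = 5
      have hout : (fun n => if n = 0 then 0 else if n = 1 then 1 else if n = 2 then 3
          else if n = 3 then 2 else (5 : Fin 6)) ∈ out16 f := by
        set ρ : ℕ → Fin 6 := fun n =>
          if n = 0 then 0 else if n = 1 then 1 else if n = 2 then 3
          else if n = 3 then 2 else 5 with hρ
        refine ⟨rfl, ?_⟩
        intro n
        match n with
        | 0 =>
          have c : own16 (ρ 0) = 1 := rfl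
          rw [c, if_neg (by decide : ¬(1 : Fin 2) = 0)]
          exact ⟨0, rfl⟩
        | 1 =>
          have c : own16 (ρ 1) = 1 := rfl
          rw [c, if_neg (by decide : ¬(1 : Fin 2) = 0)]
          exact ⟨0, rfl⟩
        | 2 =>
          have c : own16 (ρ 2) = 0 := rfl
          rw [c, if_pos rfl]
          have hf : f (prefixPath ρ 2) = m := key _ (Or.inr (by rw [lastSt_prefixPath]; rfl))
          rw [hf, hm]
          rfl
        | 3 =>
          have c : own16 (ρ 3) = 0 := rfl
          rw [c, if_pos rfl]
          have hf : f (prefixPath ρ 3) = m := key _ (Or.inl (by rw [lastSt_prefixPath]; rfl))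
          rw [hf, hm]
          rfl
        | (k + 4) =>
          have c : own16 (ρ (k + 4)) = 0 := rfl
          rw [c, if_pos rfl]
          exact (h5 (f (prefixPath ρ (k + 4)))).symm
      have := hwin _ hout
      exact absurd this (by decide)
    · -- path 0,2,4,4,... violates ρ 3 = 5
      have h24 : edg16 2 m = 4 := by
        have : ∀ x : Fin 3, x ≠ 0 → edg16 2 x = 4 := by decide
        exact this m hm
      have hout : (fun n => if n = 0 then 0 else if n = 1 then 2 else (4 : Fin 6)) ∈
          out16 f := by
        set ρ : ℕ → Fin 6 := fun n => if n = 0 then 0 else if n = 1 then 2 else 4 with hρ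
        refine ⟨rfl, ?_⟩
        intro n
        match n with
        | 0 =>
          have c : own16 (ρ 0) = 1 := rfl
          rw [c, if_neg (by decide : ¬(1 : Fin 2) = 0)]
          exact ⟨2, rfl⟩
        | 1 =>
          have c : own16 (ρ 1) = 0 := rfl
          rw [c, if_pos rfl]
          have hf : f (prefixPath ρ 1) = m := key _ (Or.inl (by rw [lastSt_prefixPath]; rfl))
          rw [hf]
          exact h24.symm
        | (k + 2) =>
          have c : own16 (ρ (k + 2)) = 0 := rfl
          rw [c, if_pos rfl]
          exact (h4 (f (prefixPath ρ (k + 2)))).symm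
      have := hwin _ hout
      exact absurd this (by decide)
  · -- history-dependent compatible strategy ensures XXX f
    refine ⟨fun ρ => (fun l => if l = [false, false, true] then 1 else 0)
      (ρ.1.map (fun q => decide (q = 2 ∨ q = 3))), ?_, ?_⟩
    · rintro ρ ρ' ⟨hl, hr⟩
      have hmap : ρ.1.map (fun q => decide (q = 2 ∨ q = 3)) =
          ρ'.1.map (fun q => decide (q = 2 ∨ q = 3)) := by
        apply List.ext_get (by simp [hl])
        intro i h1 h2
        simp only [List.get_eq_getElem, List.getElem_map]
        exact decide_eq_decide.mpr (hr i (by simpa using h1) (by simpa using h2))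
      exact congrArg (fun l => if l = [false, false, true] then (1 : Fin 3) else 0) hmap
    · rintro ρ ⟨h0, hs⟩
      have hs' : ∀ n, if own16 (ρ n) = 0
          then ρ (n + 1) = edg16 (ρ n)
            (if (prefixPath ρ n).1.map (fun q => decide (q = 2 ∨ q = 3)) =
              [false, false, true] then 1 else 0)
          else ∃ m, ρ (n + 1) = edg16 (ρ n) m := fun n => hs n
      have h1 := hs' 0
      rw [h0, if_neg (by decide)] at h1
      obtain ⟨m, hm⟩ := h1
      fin_cases m
      · -- ρ 1 = 1 ; then ρ 2 = 3, play m₂ at length-3 history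
        have e1 : ρ 1 = 1 := hm.trans (by decide)
        have h2 := hs' 1
        rw [e1, if_neg (by decide)] at h2
        obtain ⟨m2, hm2⟩ := h2
        have e2 : ρ 2 = 3 := hm2.trans (h13 m2)
        have h3 := hs' 2
        rw [e2, if_pos (by decide)] at h3
        have hf : (prefixPath ρ 2).1.map (fun q => decide (q = 2 ∨ q = 3)) =
            [false, false, true] := by
          rw [pp2, h0, e1, e2]; decide
        rw [if_pos hf] at h3
        exact h3.trans (by decide)
      · -- ρ 1 = 3 ; play m₁ then m₁
        have e1 : ρ 1 = 3 := hm.trans (by decide)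
        have h2 := hs' 1
        rw [e1, if_pos (by decide)] at h2
        have hf1 : (prefixPath ρ 1).1.map (fun q => decide (q = 2 ∨ q = 3)) ≠
            [false, false, true] := by
          rw [pp1, h0, e1]; decide
        rw [if_neg hf1] at h2
        have e2 : ρ 2 = 2 := h2.trans (by decide)
        have h3 := hs' 2
        rw [e2, if_pos (by decide)] at h3
        have hf2 : (prefixPath ρ 2).1.map (fun q => decide (q = 2 ∨ q = 3)) ≠
            [false, false, true] := by
          rw [pp2, h0, e1, e2]; decide
        rw [if_neg hf2] at h3
        exact h3.trans (by decide)
      · -- ρ 1 = 2 ; play m₁, reach 5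
        have e1 : ρ 1 = 2 := hm.trans (by decide)
        have h2 := hs' 1
        rw [e1, if_pos (by decide)] at h2
        have hf1 : (prefixPath ρ 1).1.map (fun q => decide (q = 2 ∨ q = 3)) ≠
            [false, false, true] := by
          rw [pp1, h0, e1]; decide
        rw [if_neg hf1] at h2
        have e2 : ρ 2 = 5 := h2.trans (by decide)
        have h3 := hs' 2
        rw [e2, if_pos (by decide)] at h3
        exact h3.trans (h5 _)
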